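/- Let k, m, n be positive integers with k < m ≤ n, and let {Ψ_{j1}, …, Ψ_{j(mn)}}, j = 1, …, t, be t mutually unbiased orthonormal bases of the real Hilbert space ℝ^m ⊗ ℝ^n ≅ ℝ^(mn) such that every vector Ψ_{ji} has Schmidt rank at most k. Then t ≤ (k/2)·(m(m+1) − 2)/(m − k). -/

import Mathlib

open Matrix Finset

/-- Schmidt rank of a vector in ℝ^m ⊗ ℝ^n: the rank of the associated m × n matrix. -/
noncomputable def schmidtRank {m n : ℕ} (w : Fin m × Fin n → ℝ) : ℕ :=
  (Matrix.of fun i j => w (i, j) : Matrix (Fin m) (Fin n) ℝ).rank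


lemma trace_sq_le_rank {p : Type*} [Fintype p] [DecidableEq p] (k : ℕ)
    (A : Matrix p p ℝ) (hA : A.IsHermitian) (hr : A.rank ≤ k) :
    A.trace ^ 2 ≤ (k : ℝ) * (A * A).trace := by
  set V : Matrix p p ℝ := (hA.eigenvectorUnitary : Matrix p p ℝ) with hVdef
  have hV : star V * V = 1 := Matrix.mem_unitaryGroup_iff'.mp (hA.eigenvectorUnitary).2
  have hsp : A = V * Matrix.diagonal (RCLike.ofReal ∘ hA.eigenvalues) * star V :=
    hA.spectral_theorem
  have hofReal : (RCLike.ofReal : ℝ → ℝ) ∘ hA.eigenvalues = hA.eigenvalues := rfl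
  rw [hofReal] at hsp
  set μ := hA.eigenvalues with hμ
  set D := Matrix.diagonal μ with hD
  have hV' : ∀ X : Matrix p p ℝ, star V * (V * X) = X := fun X => by
    rw [← Matrix.mul_assoc, hV, Matrix.one_mul]
  have htr : A.trace = ∑ i, μ i := by
    calc A.trace = ((V * D) * star V).trace := by rw [← hsp]
    _ = (star V * (V * D)).trace := (Matrix.trace_mul_comm _ _)
    _ = D.trace := by rw [hV']
    _ = ∑ i, μ i := Matrix.trace_diagonal μ
  have htr2 : (A * A).trace = ∑ i, μ i ^ 2 := by
    have h2 : A * A = (V * (D * D)) * star V := by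
      rw [hsp]; simp only [Matrix.mul_assoc, hV']
    calc (A * A).trace = ((V * (D * D)) * star V).trace := by rw [← h2]
    _ = (star V * (V * (D * D))).trace := (Matrix.trace_mul_comm _ _)
    _ = (D * D).trace := by rw [hV']
    _ = ∑ i, μ i ^ 2 := by
        rw [hD, Matrix.diagonal_mul_diagonal, Matrix.trace_diagonal]
        simp [sq]
  -- now Cauchy-Schwarz on nonzero eigenvalues
  have hcard : A.rank = Fintype.card {i // μ i ≠ 0} := hA.rank_eq_card_non_zero_eigs
  classical
  set s : Finset p := Finset.univ.filter (fun i => μ i ≠ 0) with hs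
  have hscard : s.card = Fintype.card {i // μ i ≠ 0} := by
    rw [Fintype.card_subtype]
  have hsum : ∑ i, μ i = ∑ i ∈ s, μ i := by
    rw [hs]
    rw [Finset.sum_filter_ne_zero]
  have h1 : (∑ i ∈ s, μ i) ^ 2 ≤ (s.card : ℝ) * ∑ i ∈ s, μ i ^ 2 := by
    simpa using sq_sum_le_card_mul_sum_sq (s := s) (f := μ)
  have h2 : ∑ i ∈ s, μ i ^ 2 ≤ ∑ i, μ i ^ 2 :=
    Finset.sum_le_sum_of_subset_of_nonneg (Finset.filter_subset _ _)
      (fun i _ _ => sq_nonneg _)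
  have hck : (s.card : ℝ) ≤ (k : ℝ) := by
    have : s.card ≤ k := by rw [hscard, ← hcard]; exact hr
    exact_mod_cast this
  have hnn : (0:ℝ) ≤ ∑ i ∈ s, μ i ^ 2 := Finset.sum_nonneg fun i _ => sq_nonneg _
  calc A.trace ^ 2 = (∑ i ∈ s, μ i) ^ 2 := by rw [htr, hsum]
  _ ≤ (s.card : ℝ) * ∑ i ∈ s, μ i ^ 2 := h1
  _ ≤ (k : ℝ) * ∑ i ∈ s, μ i ^ 2 := by apply mul_le_mul_of_nonneg_right hck hnn
  _ ≤ (k : ℝ) * ∑ i, μ i ^ 2 := by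
      apply mul_le_mul_of_nonneg_left h2 (by positivity)
  _ = (k : ℝ) * (A * A).trace := by rw [htr2]
lemma lower_bound_step {k m n : ℕ} (hk : 0 < k) (hm : 0 < m) (w : Fin m × Fin n → ℝ)
    (hnorm : ∑ α, w α * w α = 1) (hr : schmidtRank w ≤ k) :
    (1:ℝ)/k - 1/m ≤ ∑ a : Fin m, ∑ b : Fin m,
      ((∑ x, w (a,x) * w (b,x)) - (if a = b then 1/(m:ℝ) else 0))^2 := by
  set M : Matrix (Fin m) (Fin n) ℝ := Matrix.of fun i j => w (i, j) with hM
  set A : Matrix (Fin m) (Fin m) ℝ := M * Mᵀ with hA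
  have hAapp : ∀ a b, A a b = ∑ x, w (a,x) * w (b,x) := by
    intro a b
    simp [hA, Matrix.mul_apply, hM]
  have hherm : A.IsHermitian := by
    rw [hA, ← Matrix.conjTranspose_eq_transpose_of_trivial]
    exact Matrix.isHermitian_mul_conjTranspose_self M
  have hrank : A.rank ≤ k := by
    rw [hA, Matrix.rank_self_mul_transpose]
    exact hr
  have htrA : A.trace = 1 := by
    rw [Matrix.trace]
    calc ∑ a, A.diag a = ∑ a, ∑ x, w (a,x) * w (a,x) := by
          apply Finset.sum_congr rfl; intro a _; exact hAapp a a
    _ = ∑ α : Fin m × Fin n, w α * w α := by exact (Fintype.sum_prod_type (f := fun p : Fin m × Fin n => w p * w p)).symm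
    _ = 1 := hnorm
  have hsym : ∀ a b, A b a = A a b := fun a b => by simpa [Matrix.conjTranspose_apply] using congrFun (congrFun hherm a) b
  have htrA2 : (A * A).trace = ∑ a, ∑ b, (A a b)^2 := by
    rw [Matrix.trace]
    apply Finset.sum_congr rfl
    intro a _
    rw [Matrix.diag_apply, Matrix.mul_apply]
    apply Finset.sum_congr rfl
    intro b _
    rw [hsym a b, sq]
  have hkey : (1:ℝ) ≤ (k:ℝ) * (A * A).trace := by
    have := trace_sq_le_rank k A hherm hrank
    rwa [htrA, one_pow] at this
  have htr2 : (1:ℝ)/k ≤ (A * A).trace := by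
    rw [div_le_iff₀ (by exact_mod_cast hk)]
    linarith [hkey]
  -- expand the square
  have hexp : ∑ a : Fin m, ∑ b : Fin m,
      ((∑ x, w (a,x) * w (b,x)) - (if a = b then 1/(m:ℝ) else 0))^2
      = (A * A).trace - 1/m := by
    have e1 : ∀ a b : Fin m, ((∑ x, w (a,x) * w (b,x)) - (if a = b then 1/(m:ℝ) else 0))^2
        = (A a b)^2 - 2 * (A a b) * (if a = b then 1/(m:ℝ) else 0)
          + (if a = b then 1/(m:ℝ)^2 else 0) := by
      intro a b
      rw [← hAapp]
      by_cases h : a = b <;> simp [h] <;> ring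
    simp_rw [e1]
    rw [htrA2]
    have e2 : ∑ a : Fin m, ∑ b : Fin m,
        (2 * (A a b) * (if a = b then 1/(m:ℝ) else 0)) = 2/m := by
      have : ∀ a : Fin m, ∑ b : Fin m, (2 * (A a b) * (if a = b then 1/(m:ℝ) else 0))
          = 2 * A a a / m := by
        intro a
        rw [Finset.sum_eq_single a]
        · rw [if_pos rfl]; ring
        · intro b _ hb; rw [if_neg (Ne.symm hb)]; ring
        · intro h; exact absurd (Finset.mem_univ a) h
      simp_rw [this]
      rw [← Finset.sum_div, ← Finset.mul_sum]
      have : ∑ a, A a a = 1 := by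
        rw [← htrA, Matrix.trace]; rfl
      rw [this]; ring
    have e3 : ∑ a : Fin m, ∑ b : Fin m, (if a = b then 1/(m:ℝ)^2 else 0) = 1/(m:ℝ) := by
      have : ∀ a : Fin m, ∑ b : Fin m, (if a = b then 1/(m:ℝ)^2 else 0) = 1/(m:ℝ)^2 := by
        intro a
        rw [Finset.sum_eq_single a]
        · rw [if_pos rfl]
        · intro b _ hb; rw [if_neg (Ne.symm hb)]
        · intro h; exact absurd (Finset.mem_univ a) h
      simp_rw [this]
      rw [Finset.sum_const, Finset.card_univ, Fintype.card_fin, nsmul_eq_mul]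
      have hm' : (m:ℝ) ≠ 0 := by exact_mod_cast hm.ne'
      field_simp
    simp_rw [Finset.sum_add_distrib, Finset.sum_sub_distrib]
    rw [e2, e3]
    ring
  rw [hexp]
  linarith [htr2]


lemma bessel_flat {ι γ : Type*} [Fintype ι] [Fintype γ]
    (v : ι → γ → ℝ) (Z : γ → ℝ)
    (hgram : ∀ (c : ι → ℝ), ∑ J, ∑ K, c J * c K * (∑ g, v J g * v K g) ≤ ∑ J, (c J)^2) :
    ∑ J, (∑ g, v J g * Z g)^2 ≤ ∑ g, (Z g)^2 := by
  classical
  set c : ι → ℝ := fun J => ∑ g, v J g * Z g with hc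
  set S : γ → ℝ := fun g => ∑ J, c J * v J g with hS
  have key : (0:ℝ) ≤ ∑ g, (Z g - S g)^2 := Finset.sum_nonneg fun g _ => sq_nonneg _
  have h1 : ∑ g, (Z g - S g)^2
      = ∑ g, (Z g)^2 - 2 * ∑ g, (Z g * S g) + ∑ g, (S g)^2 := by
    have e : ∀ g : γ, (Z g - S g)^2 = (Z g)^2 - 2*(Z g * S g) + (S g)^2 := fun g => by ring
    simp_rw [e, Finset.sum_add_distrib, Finset.sum_sub_distrib, ← Finset.mul_sum]
  have h2 : ∑ g, Z g * S g = ∑ J, (c J)^2 := by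
    simp_rw [hS, Finset.mul_sum]
    rw [Finset.sum_comm]
    apply Finset.sum_congr rfl
    intro J _
    have e : ∀ g : γ, Z g * (c J * v J g) = c J * (v J g * Z g) := fun g => by ring
    simp_rw [e, ← Finset.mul_sum]
    rw [sq]
  have h3 : ∑ g, (S g)^2 = ∑ J, ∑ K, c J * c K * (∑ g, v J g * v K g) := by
    have e : ∀ g : γ, (S g)^2 = ∑ J, ∑ K, (c J * v J g) * (c K * v K g) := by
      intro g
      rw [sq, hS]
      rw [Finset.sum_mul_sum]
    simp_rw [e]
    rw [Finset.sum_comm]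
    apply Finset.sum_congr rfl
    intro J _
    rw [Finset.sum_comm]
    apply Finset.sum_congr rfl
    intro K _
    rw [Finset.mul_sum]
    apply Finset.sum_congr rfl
    intro g _
    ring
  have hQ := hgram c
  rw [h1, h2, h3] at key
  linarith [hQ]

lemma block_gram {t N : ℕ} (hN : 0 < N) (G : (Fin t × Fin N) → (Fin t × Fin N) → ℝ)
    (hG : ∀ J K, G J K = if J.1 = K.1 then ((if J.2 = K.2 then (1:ℝ) else 0) - 1/(N:ℝ)) else 0)
    (c : Fin t × Fin N → ℝ) :
    ∑ J, ∑ K, c J * c K * G J K ≤ ∑ J, (c J)^2 := by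
  classical
  have step1 : ∀ J : Fin t × Fin N, ∑ K, c J * c K * G J K
      = ∑ i' : Fin N, c J * c (J.1, i') * ((if J.2 = i' then (1:ℝ) else 0) - 1/(N:ℝ)) := by
    intro J
    rw [Fintype.sum_prod_type]
    rw [Finset.sum_eq_single J.1]
    · apply Finset.sum_congr rfl
      intro i' _
      rw [hG]
      simp
    · intro j' _ hj'
      apply Finset.sum_eq_zero
      intro i' _
      rw [hG, if_neg (fun h => hj' (by simpa using h.symm))]
      rw [mul_zero]
    · intro h; exact absurd (Finset.mem_univ _) h
  simp_rw [step1]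
  rw [Fintype.sum_prod_type]
  have step2 : ∀ j : Fin t, ∑ i : Fin N, ∑ i' : Fin N,
      c (j,i) * c (j,i') * ((if i = i' then (1:ℝ) else 0) - 1/(N:ℝ))
      = (∑ i : Fin N, c (j,i)^2) - (∑ i : Fin N, c (j,i))^2 / N := by
    intro j
    have e : ∀ i i' : Fin N, c (j,i) * c (j,i') * ((if i = i' then (1:ℝ) else 0) - 1/(N:ℝ))
        = c (j,i) * c (j,i') * (if i = i' then (1:ℝ) else 0) - c (j,i) * c (j,i') / N := by
      intro i i'; ring
    simp_rw [e, Finset.sum_sub_distrib]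
    congr 1
    · apply Finset.sum_congr rfl
      intro i _
      rw [Finset.sum_eq_single i]
      · rw [if_pos rfl, mul_one, sq]
      · intro i' _ hi'; rw [if_neg (Ne.symm hi'), mul_zero]
      · intro h; exact absurd (Finset.mem_univ _) h
    · rw [sq, Finset.sum_mul_sum]
      simp_rw [← Finset.sum_div]
  simp_rw [step2]
  rw [Fintype.sum_prod_type]
  apply Finset.sum_le_sum
  intro j _
  have : (0:ℝ) ≤ (∑ i : Fin N, c (j,i))^2 / N := by positivity
  linarith


noncomputable def Fm (m : ℕ) (a b a' b' : Fin m) : ℝ :=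
  ((if a = a' then (1:ℝ) else 0) * (if b = b' then 1 else 0)
    + (if a = b' then (1:ℝ) else 0) * (if b = a' then 1 else 0))/2
  - (if a = b then (1:ℝ) else 0) * (if a' = b' then 1 else 0)/m

lemma sel1 {m : ℕ} (Q : Fin m → Fin m → ℝ) (a b : Fin m) :
    ∑ a', ∑ b', Q a' b' * ((if a = a' then (1:ℝ) else 0) * (if b = b' then 1 else 0))
      = Q a b := by
  rw [Finset.sum_eq_single a]
  · rw [Finset.sum_eq_single b]
    · rw [if_pos rfl, if_pos rfl]; ring
    · intro b' _ hb'; rw [if_neg (Ne.symm hb')]; ring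
    · intro h; exact absurd (Finset.mem_univ _) h
  · intro a' _ ha'
    apply Finset.sum_eq_zero
    intro b' _
    rw [if_neg (Ne.symm ha')]; ring
  · intro h; exact absurd (Finset.mem_univ _) h

lemma sel2 {m : ℕ} (Q : Fin m → Fin m → ℝ) (a b : Fin m) :
    ∑ a', ∑ b', Q a' b' * ((if a = b' then (1:ℝ) else 0) * (if b = a' then 1 else 0))
      = Q b a := by
  rw [Finset.sum_eq_single b]
  · rw [Finset.sum_eq_single a]
    · rw [if_pos rfl, if_pos rfl]; ring
    · intro b' _ hb'; rw [if_neg (Ne.symm hb')]; ring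
    · intro h; exact absurd (Finset.mem_univ _) h
  · intro a' _ ha'
    apply Finset.sum_eq_zero
    intro b' _
    rw [if_neg (Ne.symm ha')]; ring
  · intro h; exact absurd (Finset.mem_univ _) h

lemma sel3 {m : ℕ} (Q : Fin m → Fin m → ℝ) :
    ∑ a' : Fin m, ∑ b', Q a' b' * (if a' = b' then (1:ℝ) else 0) = ∑ c, Q c c := by
  apply Finset.sum_congr rfl
  intro a' _
  rw [Finset.sum_eq_single a']
  · rw [if_pos rfl, mul_one]
  · intro b' _ hb'; rw [if_neg (Ne.symm hb'), mul_zero]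
  · intro h; exact absurd (Finset.mem_univ _) h

lemma innF {m : ℕ} (P : Fin m → Fin m → ℝ) (a b : Fin m) :
    ∑ a', ∑ b', P a' b' * Fm m a b a' b'
      = (P a b + P b a)/2 - (if a = b then (1:ℝ) else 0) * (∑ c, P c c)/m := by
  have e : ∀ a' b' : Fin m, P a' b' * Fm m a b a' b'
      = (P a' b' * ((if a = a' then (1:ℝ) else 0) * (if b = b' then 1 else 0)))/2
        + (P a' b' * ((if a = b' then (1:ℝ) else 0) * (if b = a' then 1 else 0)))/2
        - (if a = b then (1:ℝ) else 0) * (P a' b' * (if a' = b' then (1:ℝ) else 0))/m := by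
    intro a' b'
    rw [Fm]
    ring
  simp_rw [e, Finset.sum_sub_distrib, Finset.sum_add_distrib, ← Finset.sum_div,
    ← Finset.mul_sum]
  rw [sel1, sel2, sel3]
  ring

lemma traceFm {m : ℕ} (hm : 0 < m) (a b : Fin m) : ∑ c, Fm m a b c c = 0 := by
  have h := innF (fun a' b' => if a' = b' then (1:ℝ) else 0) a b
  have h1 : ∑ a' : Fin m, ∑ b', (if a' = b' then (1:ℝ) else 0) * Fm m a b a' b'
      = ∑ c, Fm m a b c c := by
    apply Finset.sum_congr rfl
    intro a' _
    rw [Finset.sum_eq_single a']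
    · rw [if_pos rfl, one_mul]
    · intro b' _ hb'; rw [if_neg (Ne.symm hb'), zero_mul]
    · intro h; exact absurd (Finset.mem_univ _) h
  have h2 : ∑ c : Fin m, (if c = c then (1:ℝ) else 0) = m := by
    simp
  rw [h1, h2] at h
  rw [h]
  have hm' : (m:ℝ) ≠ 0 := by positivity
  by_cases hab : a = b
  · simp [hab, hm']
  · simp [hab, hm', Ne.symm hab]

lemma Fmval {m : ℕ} (a b : Fin m) :
    (Fm m a b a b + Fm m a b b a)/2
      = (1 + (if a = b then (1:ℝ) else 0))/2 - (if a = b then (1:ℝ) else 0)/m := by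
  by_cases hab : a = b
  · subst hab; simp [Fm]
  · simp [Fm, hab, Ne.symm hab]

theorem mub_low_schmidt_rank_bound_real (k m n t : ℕ) (hk : 0 < k) (hkm : k < m)
    (hmn : m ≤ n)
    (Ψ : Fin t → Fin (m * n) → (Fin m × Fin n) → ℝ)
    (horth : ∀ j, ∀ i i' : Fin (m * n),
      (∑ a, Ψ j i a * Ψ j i' a) = if i = i' then 1 else 0)
    (hmub : ∀ j j', j ≠ j' → ∀ i i' : Fin (m * n),
      |∑ a, Ψ j i a * Ψ j' i' a| = 1 / Real.sqrt (m * n))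
    (hSR : ∀ j i, schmidtRank (Ψ j i) ≤ k) :
    (t : ℝ) ≤ (k : ℝ) / 2 * ((m : ℝ) * (m + 1) - 2) / ((m : ℝ) - (k : ℝ)) := by
  classical
  have hm : 0 < m := hk.trans hkm
  have hn : 0 < n := lt_of_lt_of_le hm hmn
  have hm' : (0:ℝ) < m := by exact_mod_cast hm
  have hn' : (0:ℝ) < n := by exact_mod_cast hn
  have hk' : (0:ℝ) < k := by exact_mod_cast hk
  have hd' : (0:ℝ) < (m:ℝ)*n := by positivity
  set R : Fin t → Fin (m*n) → ((Fin m × Fin n) × (Fin m × Fin n)) → ℝ :=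
    fun j i g => Ψ j i g.1 * Ψ j i g.2 - (if g.1 = g.2 then 1/((m:ℝ)*n) else 0) with hR
  set Zf : Fin m → Fin m → ((Fin m × Fin n) × (Fin m × Fin n)) → ℝ :=
    fun a b g => Fm m a b g.1.1 g.2.1 * (if g.1.2 = g.2.2 then (1:ℝ) else 0) with hZ
  have hnormψ : ∀ j i, ∑ α, Ψ j i α * Ψ j i α = 1 := fun j i => by
    simpa using horth j i i
  have htrgram : ∀ j i, ∑ c : Fin m, ∑ x, Ψ j i (c,x) * Ψ j i (c,x) = 1 := by
    intro j i
    rw [← hnormψ j i]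
    exact (Fintype.sum_prod_type (f := fun p : Fin m × Fin n => Ψ j i p * Ψ j i p)).symm
  -- Gram matrix of the R family
  have grR : ∀ j i j' i', ∑ g, R j i g * R j' i' g
      = (∑ α, Ψ j i α * Ψ j' i' α)^2 - 1/((m:ℝ)*n) := by
    intro j i j' i'
    rw [Fintype.sum_prod_type]
    have e : ∀ α β : Fin m × Fin n, R j i (α,β) * R j' i' (α,β)
        = (Ψ j i α * Ψ j' i' α) * (Ψ j i β * Ψ j' i' β)
          - (if α = β then (Ψ j i α * Ψ j i β)/((m:ℝ)*n) else 0)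
          - (if α = β then (Ψ j' i' α * Ψ j' i' β)/((m:ℝ)*n) else 0)
          + (if α = β then 1/(((m:ℝ)*n))^2 else 0) := by
      intro α β
      rw [hR]
      by_cases h : α = β
      · simp only [if_pos h]; ring
      · simp only [if_neg h]; ring
    simp_rw [e, Finset.sum_add_distrib, Finset.sum_sub_distrib]
    have p1 : ∑ α : Fin m × Fin n, ∑ β : Fin m × Fin n,
        (Ψ j i α * Ψ j' i' α) * (Ψ j i β * Ψ j' i' β)
        = (∑ α, Ψ j i α * Ψ j' i' α)^2 := by
      rw [sq, Finset.sum_mul_sum]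
    have p2 : ∑ α : Fin m × Fin n, ∑ β : Fin m × Fin n,
        (if α = β then (Ψ j i α * Ψ j i β)/((m:ℝ)*n) else 0) = 1/((m:ℝ)*n) := by
      have inner : ∀ α : Fin m × Fin n, ∑ β : Fin m × Fin n,
          (if α = β then (Ψ j i α * Ψ j i β)/((m:ℝ)*n) else 0)
          = (Ψ j i α * Ψ j i α)/((m:ℝ)*n) := by
        intro α
        rw [Finset.sum_eq_single α]
        · rw [if_pos rfl]
        · intro β _ hβ; rw [if_neg (Ne.symm hβ)]
        · intro h; exact absurd (Finset.mem_univ _) h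
      simp_rw [inner, ← Finset.sum_div, hnormψ j i]
    have p3 : ∑ α : Fin m × Fin n, ∑ β : Fin m × Fin n,
        (if α = β then (Ψ j' i' α * Ψ j' i' β)/((m:ℝ)*n) else 0) = 1/((m:ℝ)*n) := by
      have inner : ∀ α : Fin m × Fin n, ∑ β : Fin m × Fin n,
          (if α = β then (Ψ j' i' α * Ψ j' i' β)/((m:ℝ)*n) else 0)
          = (Ψ j' i' α * Ψ j' i' α)/((m:ℝ)*n) := by
        intro α
        rw [Finset.sum_eq_single α]
        · rw [if_pos rfl]
        · intro β _ hβ; rw [if_neg (Ne.symm hβ)]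
        · intro h; exact absurd (Finset.mem_univ _) h
      simp_rw [inner, ← Finset.sum_div, hnormψ j' i']
    have p4 : ∑ α : Fin m × Fin n, ∑ β : Fin m × Fin n,
        (if α = β then 1/(((m:ℝ)*n))^2 else 0) = 1/((m:ℝ)*n) := by
      have inner : ∀ α : Fin m × Fin n, ∑ β : Fin m × Fin n,
          (if α = β then 1/(((m:ℝ)*n))^2 else 0) = 1/(((m:ℝ)*n))^2 := by
        intro α
        rw [Finset.sum_eq_single α]
        · rw [if_pos rfl]
        · intro β _ hβ; rw [if_neg (Ne.symm hβ)]
        · intro h; exact absurd (Finset.mem_univ _) h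
      simp_rw [inner]
      rw [Finset.sum_const, Finset.card_univ, Fintype.card_prod, Fintype.card_fin,
        Fintype.card_fin, nsmul_eq_mul]
      push_cast
      field_simp
    rw [p1, p2, p3, p4]
    ring
  -- Gram in the block form needed for block_gram
  have hG : ∀ J K : Fin t × Fin (m*n), (∑ g, R J.1 J.2 g * R K.1 K.2 g)
      = if J.1 = K.1 then ((if J.2 = K.2 then (1:ℝ) else 0) - 1/((m*n : ℕ):ℝ)) else 0 := by
    intro J K
    rw [grR J.1 J.2 K.1 K.2]
    have hcast : ((m*n : ℕ):ℝ) = (m:ℝ)*n := by push_cast; ring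
    rw [hcast]
    by_cases hJK : J.1 = K.1
    · rw [if_pos hJK, hJK, horth K.1 J.2 K.2]
      by_cases h : J.2 = K.2 <;> simp [h]
    · rw [if_neg hJK]
      have h2 : (∑ α, Ψ J.1 J.2 α * Ψ K.1 K.2 α)^2 = 1/((m:ℝ)*n) := by
        rw [← sq_abs, hmub J.1 K.1 hJK J.2 K.2, div_pow, one_pow,
          Real.sq_sqrt (by positivity : (0:ℝ) ≤ (m:ℝ)*n)]
      rw [h2]; ring
  -- Bessel inequality
  have bes : ∀ Z : ((Fin m × Fin n) × (Fin m × Fin n)) → ℝ,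
      ∑ J : Fin t × Fin (m*n), (∑ g, R J.1 J.2 g * Z g)^2 ≤ ∑ g, (Z g)^2 := by
    intro Z
    apply bessel_flat (fun (J : Fin t × Fin (m*n)) g => R J.1 J.2 g) Z
    intro c
    have := block_gram (t := t) (N := m*n) (Nat.mul_pos hm hn)
      (fun J K => ∑ g, R J.1 J.2 g * R K.1 K.2 g) hG c
    exact this
  -- value of the inner products with Zf
  have cval : ∀ j i (a b : Fin m), (∑ g, R j i g * Zf a b g)
      = (∑ x, Ψ j i (a,x) * Ψ j i (b,x)) - (if a = b then 1/(m:ℝ) else 0) := by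
    intro j i a b
    rw [Fintype.sum_prod_type]
    have e : ∀ α β : Fin m × Fin n, R j i (α,β) * Zf a b (α,β)
        = (Ψ j i α * Ψ j i β) * Zf a b (α,β)
          - (if α = β then (Zf a b (α,β))/((m:ℝ)*n) else 0) := by
      intro α β
      rw [hR]
      by_cases h : α = β
      · simp only [if_pos h]; ring
      · simp only [if_neg h]; ring
    simp_rw [e, Finset.sum_sub_distrib]
    have partA : ∑ α : Fin m × Fin n, ∑ β : Fin m × Fin n,
        (Ψ j i α * Ψ j i β) * Zf a b (α,β)
        = (∑ x, Ψ j i (a,x) * Ψ j i (b,x)) - (if a = b then (1:ℝ) else 0) * 1 / m := by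
      have step1 : ∀ α : Fin m × Fin n, ∑ β : Fin m × Fin n,
          (Ψ j i α * Ψ j i β) * Zf a b (α,β)
          = ∑ b' : Fin m, (Ψ j i α * Ψ j i (b', α.2)) * Fm m a b α.1 b' := by
        intro α
        rw [Fintype.sum_prod_type]
        apply Finset.sum_congr rfl
        intro b' _
        rw [Finset.sum_eq_single α.2]
        · rw [hZ]; simp
        · intro y _ hy
          rw [hZ]; simp [if_neg (Ne.symm hy)]
        · intro h; exact absurd (Finset.mem_univ _) h
      simp_rw [step1]
      rw [Fintype.sum_prod_type]
      have step2 : ∑ a' : Fin m, ∑ x : Fin n, ∑ b' : Fin m,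
          (Ψ j i (a',x) * Ψ j i (b', x)) * Fm m a b a' b'
          = ∑ a' : Fin m, ∑ b' : Fin m,
            (∑ x, Ψ j i (a',x) * Ψ j i (b',x)) * Fm m a b a' b' := by
        apply Finset.sum_congr rfl
        intro a' _
        rw [Finset.sum_comm]
        apply Finset.sum_congr rfl
        intro b' _
        rw [Finset.sum_mul]
      rw [step2, innF (fun a' b' => ∑ x, Ψ j i (a',x) * Ψ j i (b',x)) a b]
      have hsymm : ∑ x, Ψ j i (b,x) * Ψ j i (a,x) = ∑ x, Ψ j i (a,x) * Ψ j i (b,x) := by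
        apply Finset.sum_congr rfl
        intro x _
        ring
      rw [hsymm, htrgram j i]
      ring
    have partB : ∑ α : Fin m × Fin n, ∑ β : Fin m × Fin n,
        (if α = β then (Zf a b (α,β))/((m:ℝ)*n) else 0) = 0 := by
      have inner : ∀ α : Fin m × Fin n, ∑ β : Fin m × Fin n,
          (if α = β then (Zf a b (α,β))/((m:ℝ)*n) else 0)
          = Fm m a b α.1 α.1 / ((m:ℝ)*n) := by
        intro α
        rw [Finset.sum_eq_single α]
        · rw [if_pos rfl, hZ]; simp
        · intro β _ hβ; rw [if_neg (Ne.symm hβ)]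
        · intro h; exact absurd (Finset.mem_univ _) h
      simp_rw [inner]
      rw [Fintype.sum_prod_type]
      have : ∀ a' : Fin m, ∑ _x : Fin n, Fm m a b a' a' / ((m:ℝ)*n)
          = (n:ℝ) * (Fm m a b a' a' / ((m:ℝ)*n)) := by
        intro a'
        rw [Finset.sum_const, Finset.card_univ, Fintype.card_fin, nsmul_eq_mul]
      simp_rw [this, ← Finset.mul_sum, ← Finset.sum_div, traceFm hm a b]
      simp
    rw [partA, partB]
    by_cases h : a = b
    · simp [h]
    · simp [h]
  -- norm of Zf
  have normZ : ∀ a b : Fin m, ∑ g, (Zf a b g)^2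
      = (n:ℝ) * ((1 + (if a = b then (1:ℝ) else 0))/2 - (if a = b then (1:ℝ) else 0)/m) := by
    intro a b
    rw [Fintype.sum_prod_type]
    have e : ∀ α β : Fin m × Fin n, (Zf a b (α,β))^2
        = (Fm m a b α.1 β.1 * Fm m a b α.1 β.1) * (if α.2 = β.2 then (1:ℝ) else 0) := by
      intro α β
      rw [hZ]
      by_cases h : α.2 = β.2
      · simp only [if_pos h]; ring
      · simp only [if_neg h]; ring
    simp_rw [e]
    have step1 : ∀ α : Fin m × Fin n, ∑ β : Fin m × Fin n,
        (Fm m a b α.1 β.1 * Fm m a b α.1 β.1) * (if α.2 = β.2 then (1:ℝ) else 0)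
        = ∑ b' : Fin m, Fm m a b α.1 b' * Fm m a b α.1 b' := by
      intro α
      rw [Fintype.sum_prod_type]
      apply Finset.sum_congr rfl
      intro b' _
      rw [Finset.sum_eq_single α.2]
      · rw [if_pos rfl, mul_one]
      · intro y _ hy; rw [if_neg (Ne.symm hy), mul_zero]
      · intro h; exact absurd (Finset.mem_univ _) h
    simp_rw [step1]
    rw [Fintype.sum_prod_type]
    have step2 : ∀ a' : Fin m, ∑ _x : Fin n, ∑ b' : Fin m, Fm m a b a' b' * Fm m a b a' b'
        = (n:ℝ) * ∑ b' : Fin m, Fm m a b a' b' * Fm m a b a' b' := by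
      intro a'
      rw [Finset.sum_const, Finset.card_univ, Fintype.card_fin, nsmul_eq_mul]
    simp_rw [step2, ← Finset.mul_sum]
    rw [innF (fun a' b' => Fm m a b a' b') a b, traceFm hm a b]
    rw [Fmval a b]
    ring
  -- per-pair Bessel bound
  have perab : ∀ a b : Fin m, ∑ J : Fin t × Fin (m*n),
      ((∑ x, Ψ J.1 J.2 (a,x) * Ψ J.1 J.2 (b,x)) - (if a = b then 1/(m:ℝ) else 0))^2
      ≤ (n:ℝ) * ((1 + (if a = b then (1:ℝ) else 0))/2 - (if a = b then (1:ℝ) else 0)/m) := by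
    intro a b
    have hb := bes (Zf a b)
    rw [normZ a b] at hb
    calc ∑ J : Fin t × Fin (m*n),
        ((∑ x, Ψ J.1 J.2 (a,x) * Ψ J.1 J.2 (b,x)) - (if a = b then 1/(m:ℝ) else 0))^2
        = ∑ J : Fin t × Fin (m*n), (∑ g, R J.1 J.2 g * Zf a b g)^2 := by
          apply Finset.sum_congr rfl
          intro J _
          rw [cval J.1 J.2 a b]
    _ ≤ _ := hb
  -- upper bound for the grand sum
  have hrow : ∀ a : Fin m, ∑ b : Fin m, (if a = b then (1:ℝ) else 0) = 1 := fun a => by simp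
  have hub : ∑ a : Fin m, ∑ b : Fin m,
      ((n:ℝ) * ((1 + (if a = b then (1:ℝ) else 0))/2 - (if a = b then (1:ℝ) else 0)/m))
      = (n:ℝ) * (((m:ℝ)^2 + m)/2 - 1) := by
    have e : ∀ a b : Fin m,
        (n:ℝ) * ((1 + (if a = b then (1:ℝ) else 0))/2 - (if a = b then (1:ℝ) else 0)/m)
        = (n:ℝ)/2 + ((n:ℝ)/2 - (n:ℝ)/m) * (if a = b then (1:ℝ) else 0) := by
      intro a b
      by_cases h : a = b
      · simp only [if_pos h]; ring
      · simp only [if_neg h]; ring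
    have hrow2 : ∀ a : Fin m, ∑ b : Fin m,
        ((n:ℝ)/2 + ((n:ℝ)/2 - (n:ℝ)/m) * (if a = b then (1:ℝ) else 0))
        = (m:ℝ) * ((n:ℝ)/2) + ((n:ℝ)/2 - (n:ℝ)/m) := by
      intro a
      rw [Finset.sum_add_distrib, Finset.sum_const, Finset.card_univ, Fintype.card_fin,
        nsmul_eq_mul, ← Finset.mul_sum, hrow a, mul_one]
    simp_rw [e, hrow2]
    rw [Finset.sum_const, Finset.card_univ, Fintype.card_fin, nsmul_eq_mul]
    have hmne : (m:ℝ) ≠ 0 := by positivity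
    field_simp
    ring
  have upper : ∑ a : Fin m, ∑ b : Fin m, ∑ J : Fin t × Fin (m*n),
      ((∑ x, Ψ J.1 J.2 (a,x) * Ψ J.1 J.2 (b,x)) - (if a = b then 1/(m:ℝ) else 0))^2
      ≤ (n:ℝ) * (((m:ℝ)^2 + m)/2 - 1) := by
    rw [← hub]
    apply Finset.sum_le_sum
    intro a _
    apply Finset.sum_le_sum
    intro b _
    exact perab a b
  -- swap the sums
  have swap : ∑ J : Fin t × Fin (m*n), ∑ a : Fin m, ∑ b : Fin m,
      ((∑ x, Ψ J.1 J.2 (a,x) * Ψ J.1 J.2 (b,x)) - (if a = b then 1/(m:ℝ) else 0))^2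
      = ∑ a : Fin m, ∑ b : Fin m, ∑ J : Fin t × Fin (m*n),
      ((∑ x, Ψ J.1 J.2 (a,x) * Ψ J.1 J.2 (b,x)) - (if a = b then 1/(m:ℝ) else 0))^2 := by
    rw [Finset.sum_comm]
    apply Finset.sum_congr rfl
    intro a _
    rw [Finset.sum_comm]
  -- lower bound for the grand sum
  have lowerS : (t:ℝ) * ((m:ℝ)*n) * ((1:ℝ)/k - 1/m)
      ≤ ∑ J : Fin t × Fin (m*n), ∑ a : Fin m, ∑ b : Fin m,
        ((∑ x, Ψ J.1 J.2 (a,x) * Ψ J.1 J.2 (b,x)) - (if a = b then 1/(m:ℝ) else 0))^2 := by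
    have each : ∀ J : Fin t × Fin (m*n), (1:ℝ)/k - 1/m ≤ ∑ a : Fin m, ∑ b : Fin m,
        ((∑ x, Ψ J.1 J.2 (a,x) * Ψ J.1 J.2 (b,x)) - (if a = b then 1/(m:ℝ) else 0))^2 :=
      fun J => lower_bound_step hk hm (Ψ J.1 J.2) (hnormψ J.1 J.2) (hSR J.1 J.2)
    calc (t:ℝ) * ((m:ℝ)*n) * ((1:ℝ)/k - 1/m)
        = ∑ _J : Fin t × Fin (m*n), ((1:ℝ)/k - 1/m) := by
          rw [Finset.sum_const, Finset.card_univ, Fintype.card_prod, Fintype.card_fin,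
            Fintype.card_fin, nsmul_eq_mul]
          push_cast
          ring
    _ ≤ _ := Finset.sum_le_sum fun J _ => each J
  have main : (t:ℝ) * ((m:ℝ)*n) * ((1:ℝ)/k - 1/m) ≤ (n:ℝ) * (((m:ℝ)^2 + m)/2 - 1) :=
    lowerS.trans (le_of_le_of_eq (le_of_eq swap) rfl |>.trans upper)
  -- final arithmetic
  have hmk : (0:ℝ) < (m:ℝ) - k := by
    have : (k:ℝ) < m := by exact_mod_cast hkm
    linarith
  rw [le_div_iff₀ hmk]
  have key2 : (t:ℝ) * ((m:ℝ)*n) * ((1:ℝ)/k - 1/m) = ((n:ℝ)/k) * ((t:ℝ) * ((m:ℝ) - k)) := by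
    field_simp
  have key3 : (n:ℝ) * (((m:ℝ)^2 + m)/2 - 1)
      = ((n:ℝ)/k) * ((k:ℝ)/2 * ((m:ℝ)*((m:ℝ)+1) - 2)) := by
    field_simp
  rw [key2, key3] at main
  have hnk : (0:ℝ) < (n:ℝ)/k := by positivity
  exact le_of_mul_le_mul_left main hnk
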